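/- If r is a proper non-empty prefix of a Lyndon word x and s is the proper non-empty suffix of x of the same length, then r is strongly less than s (there exist words p and letters a < b with r = p a r' and s = p b s'). -/
import Mathlib


variable {α : Type*} [LinearOrder α] [Inhabited α]

/-- A Lyndon word: a non-empty word strictly lexicographically smaller than
all its proper non-empty suffixes. -/
def IsLyndon (w : List α) : Prop :=
  w ≠ [] ∧ ∀ v : List α, v ≠ [] → v ≠ w → v <:+ w → List.Lex (· < ·) w v

/-- `wpow x k` is the word `x` repeated `k` times. -/
def wpow (x : List α) (k : ℕ) : List α := (List.replicate k x).flatten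

/-- `infWord x` is the infinite word `x^∞` (junk value if `x = []`). -/
def infWord (x : List α) : ℕ → α := fun i => x.getD (i % x.length) default

/-- Strict lexicographic order on infinite words. -/
def InfLt (f g : ℕ → α) : Prop := ∃ n, (∀ i < n, f i = g i) ∧ f n < g n

/-- The infinite ordering `≺` on non-empty words. -/
def Prec (u v : List α) : Prop :=
  InfLt (infWord u) (infWord v) ∨ (infWord u = infWord v ∧ v.length < u.length)

/-- `u` is strongly less than `v`: they share a common prefix followed by
strictly comparable letters. -/
def StrongLt (u v : List α) : Prop :=
  ∃ (p s t : List α) (a b : α), a < b ∧ u = p ++ a :: s ∧ v = p ++ b :: t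



omit [Inhabited α] in
lemma not_lex_append (r t : List α) : ¬ List.Lex (· < ·) (r ++ t) r := by
  induction r with
  | nil => intro h; cases h
  | cons a r ih =>
    intro h
    cases h with
    | rel h => exact lt_irrefl _ h
    | cons h => exact ih h

lemma lex_prefix_aux : ∀ {u v : List α}, List.Lex (· < ·) u v →
    ∀ r : List α, r <+: u → v.length ≤ r.length → v <+: r ∨ StrongLt r v := by
  intro u v h
  induction h with
  | nil =>
    intro r hru hlen
    rw [List.prefix_nil] at hru
    subst hru
    simp at hlen
  | @rel a u' b v' hab =>
    intro r hru hlen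
    rcases r with _ | ⟨c, r'⟩
    · simp at hlen
    · obtain ⟨t, ht⟩ := hru
      have hc : c = a := by
        have := congrArg (List.head? ·) ht
        simpa using this
      subst hc
      exact Or.inr ⟨[], r', v', c, b, hab, rfl, rfl⟩
  | @cons a u' v' h ih =>
    intro r hru hlen
    rcases r with _ | ⟨c, r'⟩
    · simp at hlen
    · obtain ⟨t, ht⟩ := hru
      have hc : c = a := by
        have := congrArg (List.head? ·) ht
        simpa using this
      subst hc
      have hru' : r' <+: u' := ⟨t, by simpa using ht⟩
      rcases ih r' hru' (by simpa using hlen) with ⟨t', ht'⟩ | ⟨p, s, t, a', b', hab, h1, h2⟩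
      · exact Or.inl ⟨t', by simp [ht']⟩
      · exact Or.inr ⟨c :: p, s, t, a', b', hab, by simp [h1], by simp [h2]⟩

/-- If `r` is a proper non-empty prefix of a Lyndon word `x` and `s` is the
suffix of `x` of the same length, then `r` is strongly less than `s`. -/
theorem prefix_strongLt_suffix {α : Type*} [LinearOrder α] [Inhabited α]
    (x r s : List α) (hx : IsLyndon x)
    (hr : r ≠ []) (hr' : r ≠ x) (hrpx : r <+: x)
    (hs : s <:+ x) (hlen : s.length = r.length) :
    StrongLt r s := by
  have hrl : r.length < x.length := by
    refine lt_of_le_of_ne hrpx.length_le ?_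
    intro h
    exact hr' (hrpx.eq_of_length h)
  have hsne : s ≠ [] := by
    intro h; subst h; simp at hlen; exact hr (List.eq_nil_of_length_eq_zero hlen.symm)
  have hsnx : s ≠ x := by
    intro h; subst h; omega
  have hlex := hx.2 s hsne hsnx hs
  rcases lex_prefix_aux hlex r hrpx hlen.le with h' | h'
  · exfalso
    have hsr : s = r := h'.eq_of_length hlen
    subst hsr
    rcases hrpx with ⟨t, ht⟩
    rw [← ht] at hlex
    exact not_lex_append s t hlex
  · exact h'
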